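/- arXiv:1703.08739 — 2 statements merged into one kernel-verified Lean document; each statement's English description precedes it below -/
import Mathlib

section
/- Let G be a k-geodetic digraph (k ≥ 2) with out-degree 2, order M(2,k)+2, and in-degree sequence (1,1,1,1,2,...,2,3,3,3,3). Then every vertex of in-degree 3 has exactly two in-neighbours of in-degree 1. -/
/-- Moore bound `M(d,k) = 1 + d + ... + d^k`. -/
def moore (d k : ℕ) : ℕ := ∑ i ∈ Finset.range (k + 1), d ^ i

/-- Moore bound with integer argument, with the convention `M(d,k) = 0` for `k < 0`. -/
def mooreZ (d : ℕ) (j : ℤ) : ℕ := if j < 0 then 0 else moore d j.toNat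

/-- Walks of length at most `k` from `u` to `v` in the digraph with arc relation `A`,
encoded as vertex lists (so a walk of length `≤ k` is a list of length `≤ k+1`). -/
def walksUpTo {V : Type*} (A : V → V → Prop) (k : ℕ) (u v : V) : Set (List V) :=
  {l | l.Chain' A ∧ l.head? = some u ∧ l.getLast? = some v ∧ l.length ≤ k + 1}

/-- A digraph is `k`-geodetic if between any ordered pair of vertices there is at most
one directed walk of length at most `k`. -/
def IsGeodetic {V : Type*} (A : V → V → Prop) (k : ℕ) : Prop :=
  ∀ u v : V, (walksUpTo A k u v).Subsingleton

/-- `v` is reachable from `u` by a directed walk of length at most `k`. -/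
def reachIn {V : Type*} (A : V → V → Prop) (k : ℕ) (u v : V) : Prop :=
  (walksUpTo A k u v).Nonempty

/-- Out-degree of a vertex. -/
noncomputable def outDeg {V : Type*} (A : V → V → Prop) (u : V) : ℕ := {v | A u v}.ncard

/-- In-degree of a vertex. -/
noncomputable def inDeg {V : Type*} (A : V → V → Prop) (v : V) : ℕ := {u | A u v}.ncard

/-- The outlier set `O(u)`: vertices not reachable from `u` within distance `k`. -/
def outlier {V : Type*} (A : V → V → Prop) (k : ℕ) (u : V) : Set V :=
  {v | ¬ reachIn A k u v}

open Classical

section Stmt17Aux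

variable {V : Type*} {A : V → V → Prop} {k : ℕ}

private lemma singleton_walk (j : ℕ) (x : V) : [x] ∈ walksUpTo A j x x := by
  refine ⟨List.isChain_singleton _, rfl, rfl, by simp⟩

private lemma walksUpTo_mono {j j' : ℕ} (h : j ≤ j') {u v : V} {l : List V}
    (hl : l ∈ walksUpTo A j u v) : l ∈ walksUpTo A j' u v :=
  ⟨hl.1, hl.2.1, hl.2.2.1, hl.2.2.2.trans (by omega)⟩

private lemma walk_ne_nil {j : ℕ} {u v : V} {l : List V} (hl : l ∈ walksUpTo A j u v) :
    l ≠ [] := by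
  rintro rfl; simpa using hl.2.1

private lemma walk_cons {j : ℕ} {u c v : V} {l : List V} (h : A u c)
    (hl : l ∈ walksUpTo A j c v) : (u :: l) ∈ walksUpTo A (j + 1) u v := by
  obtain ⟨hc, hh, hg, hlen⟩ := hl
  have hne : l ≠ [] := by rintro rfl; simp at hh
  refine ⟨List.isChain_cons.2 ⟨?_, hc⟩, rfl, ?_, by simp; omega⟩
  · intro y hy
    rw [hh] at hy
    simp_all
  · cases l with
    | nil => exact absurd rfl hne
    | cons b t => rw [List.getLast?_cons_cons]; exact hg

private lemma walk_snoc {j : ℕ} {u w v : V} {l : List V} (hl : l ∈ walksUpTo A j u w)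
    (h : A w v) : l ++ [v] ∈ walksUpTo A (j + 1) u v := by
  obtain ⟨hc, hh, hg, hlen⟩ := hl
  have hne : l ≠ [] := by rintro rfl; simp at hh
  refine ⟨List.isChain_append.2 ⟨hc, List.isChain_singleton _, ?_⟩, ?_, ?_, ?_⟩
  · intro a ha b hb
    rw [hg] at ha
    simp at ha hb
    subst ha; subst hb; exact h
  · cases l with
    | nil => exact absurd rfl hne
    | cons b t => simpa using hh
  · simp [List.getLast?_concat]
  · simp; omega

private lemma reachIn_self (j : ℕ) (x : V) : reachIn A j x x := ⟨[x], singleton_walk j x⟩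

private lemma reachIn_snoc {j : ℕ} {u w v : V} (hr : reachIn A j u w) (h : A w v) :
    reachIn A (j + 1) u v := by
  obtain ⟨l, hl⟩ := hr; exact ⟨l ++ [v], walk_snoc hl h⟩

private lemma reachIn_zero {x v : V} : reachIn A 0 x v ↔ v = x := by
  constructor
  · rintro ⟨l, hc, hh, hg, hlen⟩
    cases l with
    | nil => simp at hh
    | cons a t =>
      cases t with
      | nil => simp at hh hg; rw [← hg, hh]
      | cons b t' => simp at hlen
  · rintro rfl; exact reachIn_self 0 _

private lemma reachIn_succ {j : ℕ} {x v : V} :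
    reachIn A (j + 1) x v ↔ v = x ∨ ∃ c, A x c ∧ reachIn A j c v := by
  constructor
  · rintro ⟨l, hc, hh, hg, hlen⟩
    cases l with
    | nil => simp at hh
    | cons a t =>
      simp at hh; subst hh
      cases t with
      | nil => simp at hg; exact Or.inl hg.symm
      | cons b t' =>
        refine Or.inr ⟨b, (List.isChain_cons_cons.1 hc).1,
          ⟨b :: t', (List.isChain_cons_cons.1 hc).2, rfl, ?_, ?_⟩⟩
        · rw [List.getLast?_cons_cons] at hg; exact hg
        · simp at hlen ⊢; omega
  · rintro (rfl | ⟨c, hac, l, hl⟩)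
    · exact reachIn_self _ _
    · exact ⟨x :: l, walk_cons hac hl⟩

private lemma walk_decomp {l : List V} {j : ℕ} {u v : V} (h : l ∈ walksUpTo A (j + 1) u v) :
    (l = [u] ∧ u = v) ∨ ∃ w, reachIn A j u w ∧ A w v := by
  induction l generalizing j u with
  | nil => simpa using h.2.1
  | cons a t ih =>
    have ha : a = u := by simpa using h.2.1
    subst ha
    cases t with
    | nil =>
      have : a = v := by simpa using h.2.2.1
      exact Or.inl ⟨rfl, this⟩
    | cons b t' =>
      have hab : A a b := (List.isChain_cons_cons.1 h.1).1
      have ht : (b :: t') ∈ walksUpTo A j b v := by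
        refine ⟨(List.isChain_cons_cons.1 h.1).2, rfl, ?_, ?_⟩
        · have := h.2.2.1; rw [List.getLast?_cons_cons] at this; exact this
        · have := h.2.2.2; simp at this ⊢; omega
      cases j with
      | zero =>
        have hlen := ht.2.2.2
        cases t' with
        | nil =>
          have : b = v := by simpa using ht.2.2.1
          subst this
          exact Or.inr ⟨a, reachIn_self _ _, hab⟩
        | cons c t'' => simp at hlen
      | succ j' =>
        rcases ih ht with ⟨he, hbv⟩ | ⟨w, hw, haw⟩
        · exact Or.inr ⟨a, reachIn_self _ _, hbv ▸ hab⟩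
        · exact Or.inr ⟨w, reachIn_succ.2 (Or.inr ⟨b, hab, hw⟩), haw⟩

private lemma no_return (hgeo : IsGeodetic A k) {j : ℕ} {c w : V} (hj : j + 1 ≤ k)
    (h : reachIn A j c w) (ha : A w c) : False := by
  obtain ⟨l, hl⟩ := h
  have h1 : l ++ [c] ∈ walksUpTo A k c c :=
    walksUpTo_mono hj (walk_snoc hl ha)
  have h2 : [c] ∈ walksUpTo A k c c := singleton_walk _ _
  have he := hgeo c c h1 h2
  have hlen := congrArg List.length he
  simp at hlen
  exact walk_ne_nil hl hlen

private lemma sibling_disj (hgeo : IsGeodetic A k) {j : ℕ} {x c1 c2 z : V} (hj : j + 1 ≤ k)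
    (h1 : A x c1) (h2 : A x c2) (hne : c1 ≠ c2)
    (r1 : reachIn A j c1 z) (r2 : reachIn A j c2 z) : False := by
  obtain ⟨l1, hl1⟩ := r1
  obtain ⟨l2, hl2⟩ := r2
  have he := hgeo x z (walksUpTo_mono hj (walk_cons h1 hl1))
    (walksUpTo_mono hj (walk_cons h2 hl2))
  have : l1 = l2 := by simpa using congrArg List.tail he
  rw [this] at hl1
  have := hl1.2.1
  rw [hl2.2.1] at this
  exact hne (by simpa using this.symm)

private lemma penult_unique (hgeo : IsGeodetic A k) {m : ℕ} {c z w w' : V} (hm : m + 1 ≤ k)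
    (r : reachIn A m c w) (haw : A w z) (r' : reachIn A m c w') (haw' : A w' z) : w = w' := by
  obtain ⟨l, hl⟩ := r
  obtain ⟨l', hl'⟩ := r'
  have he := hgeo c z (walksUpTo_mono hm (walk_snoc hl haw))
    (walksUpTo_mono hm (walk_snoc hl' haw'))
  have hll : l = l' := by
    have := congrArg List.dropLast he
    simpa [List.dropLast_concat] using this
  have h1 := hl.2.2.1
  rw [hll, hl'.2.2.1] at h1
  simpa using h1.symm

private lemma moore_two_eq (k : ℕ) : moore 2 k + 1 = 2 ^ (k + 1) := by
  induction k with
  | zero => simp [moore]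
  | succ k ih =>
    have h2 : (2:ℕ) ^ (k + 1 + 1) = 2 ^ (k + 1) + 2 ^ (k + 1) := by ring
    simp only [moore, Finset.sum_range_succ] at ih ⊢
    omega

private lemma children (hout : ∀ u : V, outDeg A u = 2) (x : V) :
    ∃ c1 c2 : V, c1 ≠ c2 ∧ {v | A x v} = {c1, c2} :=
  Set.ncard_eq_two.1 (hout x)

private lemma card_reach [Fintype V] (hgeo : IsGeodetic A k) (hout : ∀ u : V, outDeg A u = 2) :
    ∀ j, j ≤ k → ∀ x : V, {v | reachIn A j x v}.ncard + 1 = 2 ^ (j + 1) := by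
  intro j
  induction j with
  | zero =>
    intro _ x
    have h : {v | reachIn A 0 x v} = {x} := by
      ext v; simp [reachIn_zero]
    rw [h]; simp
  | succ j ih =>
    intro hj x
    obtain ⟨c1, c2, hne, hcc⟩ := children hout x
    have hc1 : A x c1 := by
      have : c1 ∈ {v | A x v} := by rw [hcc]; simp
      exact this
    have hc2 : A x c2 := by
      have : c2 ∈ {v | A x v} := by rw [hcc]; simp
      exact this
    have hset : {v | reachIn A (j+1) x v}
        = {x} ∪ ({v | reachIn A j c1 v} ∪ {v | reachIn A j c2 v}) := by
      ext v
      simp only [Set.mem_setOf_eq, Set.mem_union, Set.mem_singleton_iff, reachIn_succ]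
      constructor
      · rintro (rfl | ⟨c, hc, hr⟩)
        · exact Or.inl rfl
        · have : c ∈ ({c1, c2} : Set V) := by rw [← hcc]; exact hc
          rcases this with rfl | rfl
          · exact Or.inr (Or.inl hr)
          · exact Or.inr (Or.inr hr)
      · rintro (rfl | (hr | hr))
        · exact Or.inl rfl
        · exact Or.inr ⟨c1, hc1, hr⟩
        · exact Or.inr ⟨c2, hc2, hr⟩
    have d12 : Disjoint {v | reachIn A j c1 v} {v | reachIn A j c2 v} :=
      Set.disjoint_left.2 fun z hz1 hz2 => sibling_disj hgeo hj hc1 hc2 hne hz1 hz2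
    have d0 : Disjoint ({x} : Set V) ({v | reachIn A j c1 v} ∪ {v | reachIn A j c2 v}) := by
      rw [Set.disjoint_left]
      rintro z rfl (h | h)
      · exact no_return hgeo hj h hc1
      · exact no_return hgeo hj h hc2
    have e1 := ih (by omega) c1
    have e2 := ih (by omega) c2
    have hp : (2:ℕ) ^ (j + 1 + 1) = 2 ^ (j + 1) + 2 ^ (j + 1) := by ring
    rw [hset, Set.ncard_union_eq d0, Set.ncard_union_eq d12, Set.ncard_singleton]
    omega

private lemma card_outlier [Fintype V] (hgeo : IsGeodetic A k) (hout : ∀ u : V, outDeg A u = 2)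
    (hcard : Fintype.card V = moore 2 k + 2) (x : V) : (outlier A k x).ncard = 2 := by
  have h1 := card_reach hgeo hout k le_rfl x
  have hco : outlier A k x = {v | reachIn A k x v}ᶜ := rfl
  have h2 := Set.ncard_add_ncard_compl {v | reachIn A k x v}
  rw [Nat.card_eq_fintype_card, hcard] at h2
  have hm := moore_two_eq k
  rw [hco]
  omega

private lemma pair_inter {a b : V} (hab : a ≠ b) (s : Set V) :
    (({a, b} : Set V) ∩ s).ncard
      = (if a ∈ s then 1 else 0) + (if b ∈ s then 1 else 0) := by
  by_cases ha : a ∈ s <;> by_cases hb : b ∈ s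
  · have h : ({a, b} : Set V) ∩ s = {a, b} := by
      ext w; constructor
      · rintro ⟨hw, _⟩; exact hw
      · rintro (rfl | rfl) <;> exact ⟨by simp, by assumption⟩
    rw [h, Set.ncard_pair hab]; simp [ha, hb]
  · have h : ({a, b} : Set V) ∩ s = {a} := by
      ext w; constructor
      · rintro ⟨(rfl | rfl), hw⟩
        · rfl
        · exact absurd hw hb
      · rintro rfl; exact ⟨by simp, ha⟩
    rw [h, Set.ncard_singleton]; simp [ha, hb]
  · have h : ({a, b} : Set V) ∩ s = {b} := by
      ext w; constructor
      · rintro ⟨(rfl | rfl), hw⟩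
        · exact absurd hw ha
        · rfl
      · rintro rfl; exact ⟨by simp, hb⟩
    rw [h, Set.ncard_singleton]; simp [ha, hb]
  · have h : ({a, b} : Set V) ∩ s = ∅ := by
      ext w; constructor
      · rintro ⟨(rfl | rfl), hw⟩
        · exact absurd hw ha
        · exact absurd hw hb
      · rintro ⟨⟩
    rw [h]; simp [ha, hb]

private lemma sum_indicator_eq_ncard [Fintype V] (p : V → Prop) :
    (∑ z : V, if p z then (1:ℕ) else 0) = {z | p z}.ncard := by
  rw [Set.ncard_eq_toFinset_card', Set.toFinset_setOf, Finset.card_filter]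

private lemma side_count [Fintype V] {m : ℕ} (hgeo : IsGeodetic A (m + 1)) (c z : V) :
    {w | A w z ∧ reachIn A m c w}.ncard
      = if reachIn A (m + 1) c z ∧ z ≠ c then 1 else 0 := by
  by_cases h : reachIn A (m + 1) c z ∧ z ≠ c
  · rw [if_pos h]
    obtain ⟨⟨l, hl⟩, hzc⟩ := h
    rcases walk_decomp hl with ⟨_, hcz⟩ | ⟨w, hw, haw⟩
    · exact absurd hcz.symm hzc
    · rw [Set.ncard_eq_one]
      refine ⟨w, ?_⟩
      ext w'
      simp only [Set.mem_setOf_eq, Set.mem_singleton_iff]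
      constructor
      · rintro ⟨haw', hw'⟩
        exact penult_unique hgeo le_rfl hw' haw' hw haw
      · rintro rfl; exact ⟨haw, hw⟩
  · rw [if_neg h]
    have : {w | A w z ∧ reachIn A m c w} = ∅ := by
      ext w
      simp only [Set.mem_setOf_eq, Set.mem_empty_iff_false, iff_false, not_and]
      intro haw hw
      refine h ⟨reachIn_snoc hw haw, ?_⟩
      rintro rfl
      exact no_return hgeo le_rfl hw haw
    rw [this, Set.ncard_empty]

private lemma master [Fintype V] {m : ℕ} (hgeo : IsGeodetic A (m + 1))
    {x c1 c2 : V} (hne : c1 ≠ c2) (hcc : {v | A x v} = {c1, c2}) (z : V) :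
    inDeg A z = (if A x z then 1 else 0)
      + (if reachIn A (m + 1) c1 z ∧ z ≠ c1 then 1 else 0)
      + (if reachIn A (m + 1) c2 z ∧ z ≠ c2 then 1 else 0)
      + ({w | A w z} ∩ outlier A (m + 1) x).ncard := by
  have hc1 : A x c1 := by
    have : c1 ∈ {v | A x v} := by rw [hcc]; simp
    exact this
  have hc2 : A x c2 := by
    have : c2 ∈ {v | A x v} := by rw [hcc]; simp
    exact this
  set s0 : Set V := {w | A w z ∧ w = x} with hs0
  set s1 : Set V := {w | A w z ∧ reachIn A m c1 w} with hs1
  set s2 : Set V := {w | A w z ∧ reachIn A m c2 w} with hs2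
  set s3 : Set V := {w | A w z ∧ ¬ reachIn A (m + 1) x w} with hs3
  have hcover : {w | A w z} = s0 ∪ s1 ∪ s2 ∪ s3 := by
    ext w
    simp only [hs0, hs1, hs2, hs3, Set.mem_setOf_eq, Set.mem_union]
    constructor
    · intro haw
      by_cases hr : reachIn A (m + 1) x w
      · rcases reachIn_succ.1 hr with rfl | ⟨c, hc, hrc⟩
        · exact Or.inl (Or.inl (Or.inl ⟨haw, rfl⟩))
        · have : c ∈ ({c1, c2} : Set V) := by rw [← hcc]; exact hc
          rcases this with rfl | rfl
          · exact Or.inl (Or.inl (Or.inr ⟨haw, hrc⟩))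
          · exact Or.inl (Or.inr ⟨haw, hrc⟩)
      · exact Or.inr ⟨haw, hr⟩
    · rintro (((⟨h, _⟩ | ⟨h, _⟩) | ⟨h, _⟩) | ⟨h, _⟩) <;> exact h
  have hsub1 : ∀ w, reachIn A m c1 w → reachIn A (m + 1) x w :=
    fun w hw => reachIn_succ.2 (Or.inr ⟨c1, hc1, hw⟩)
  have hsub2 : ∀ w, reachIn A m c2 w → reachIn A (m + 1) x w :=
    fun w hw => reachIn_succ.2 (Or.inr ⟨c2, hc2, hw⟩)
  have d01 : Disjoint s0 s1 := by
    rw [Set.disjoint_left]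
    rintro w ⟨_, rfl⟩ ⟨_, hw⟩
    exact no_return hgeo le_rfl hw hc1
  have d02 : Disjoint s0 s2 := by
    rw [Set.disjoint_left]
    rintro w ⟨_, rfl⟩ ⟨_, hw⟩
    exact no_return hgeo le_rfl hw hc2
  have d12 : Disjoint s1 s2 := by
    rw [Set.disjoint_left]
    rintro w ⟨_, hw1⟩ ⟨_, hw2⟩
    exact sibling_disj hgeo le_rfl hc1 hc2 hne hw1 hw2
  have d3 : Disjoint (s0 ∪ s1 ∪ s2) s3 := by
    rw [Set.disjoint_left]
    rintro w ((⟨_, rfl⟩ | ⟨_, hw⟩) | ⟨_, hw⟩) ⟨_, hnr⟩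
    · exact hnr (reachIn_self _ _)
    · exact hnr (hsub1 _ hw)
    · exact hnr (hsub2 _ hw)
  have d012 : Disjoint (s0 ∪ s1) s2 := Set.disjoint_union_left.2 ⟨d02, d12⟩
  have hcount0 : s0.ncard = if A x z then 1 else 0 := by
    by_cases h : A x z
    · rw [if_pos h]
      have h' : s0 = {x} := by
        ext w
        simp only [hs0, Set.mem_setOf_eq, Set.mem_singleton_iff]
        constructor
        · rintro ⟨_, rfl⟩; rfl
        · rintro rfl; exact ⟨h, rfl⟩
      rw [h', Set.ncard_singleton]
    · rw [if_neg h]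
      have h' : s0 = ∅ := by
        ext w
        simp only [hs0, Set.mem_setOf_eq, Set.mem_empty_iff_false, iff_false, not_and]
        rintro haw rfl; exact h haw
      rw [h', Set.ncard_empty]
  have hcount1 := side_count hgeo c1 z
  have hcount2 := side_count hgeo c2 z
  have hcount3 : s3 = {w | A w z} ∩ outlier A (m + 1) x := by
    ext w; simp only [hs3, Set.mem_setOf_eq, Set.mem_inter_iff]; rfl
  have key : {w | A w z}.ncard = s0.ncard + s1.ncard + s2.ncard + s3.ncard := by
    rw [hcover, Set.ncard_union_eq d3, Set.ncard_union_eq d012, Set.ncard_union_eq d01]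
  show {w | A w z}.ncard = _
  rw [key, hcount0, hcount1, hcount2, hcount3]

private lemma master_bound [Fintype V] {m : ℕ} (hgeo : IsGeodetic A (m + 1))
    (hout : ∀ u : V, outDeg A u = 2) (x z : V) :
    inDeg A z ≤ 2 + ({w | A w z} ∩ outlier A (m + 1) x).ncard := by
  obtain ⟨c1, c2, hne, hcc⟩ := children hout x
  rw [master hgeo hne hcc z]
  by_cases hxz : A x z
  · have hz : z ∈ ({c1, c2} : Set V) := by rw [← hcc]; exact hxz
    have he0 : (if A x z then (1:ℕ) else 0) ≤ 1 := by split <;> omega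
    rcases hz with hz | hz
    · rw [if_neg (show ¬(reachIn A (m+1) c1 z ∧ z ≠ c1) from fun h => h.2 hz)]
      have : (if reachIn A (m+1) c2 z ∧ z ≠ c2 then (1:ℕ) else 0) ≤ 1 := by split <;> omega
      omega
    · rw [if_neg (show ¬(reachIn A (m+1) c2 z ∧ z ≠ c2) from fun h => h.2 hz)]
      have : (if reachIn A (m+1) c1 z ∧ z ≠ c1 then (1:ℕ) else 0) ≤ 1 := by split <;> omega
      omega
  · rw [if_neg hxz]
    have h1 : (if reachIn A (m+1) c1 z ∧ z ≠ c1 then (1:ℕ) else 0) ≤ 1 := by split <;> omega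
    have h2 : (if reachIn A (m+1) c2 z ∧ z ≠ c2 then (1:ℕ) else 0) ≤ 1 := by split <;> omega
    omega

end Stmt17Aux

/-- Let `G` be a `k`-geodetic digraph (`k ≥ 2`) with out-degree 2, order
`M(2,k)+2`, and in-degree sequence `(1,1,1,1,2,…,2,3,3,3,3)`.  Then every vertex of
in-degree 3 has exactly two in-neighbours of in-degree 1. -/
theorem stmt17 {V : Type*} [Fintype V] (A : V → V → Prop) (k : ℕ) (hk : 2 ≤ k)
    (hgeo : IsGeodetic A k) (hout : ∀ u : V, outDeg A u = 2)
    (hcard : Fintype.card V = moore 2 k + 2)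
    (h1 : {v : V | inDeg A v = 1}.ncard = 4)
    (h3 : {v : V | inDeg A v = 3}.ncard = 4)
    (hall : ∀ v : V, inDeg A v = 1 ∨ inDeg A v = 2 ∨ inDeg A v = 3) :
    ∀ v' : V, inDeg A v' = 3 → {v : V | inDeg A v = 1 ∧ A v v'}.ncard = 2 := by
  obtain ⟨m, rfl⟩ : ∃ m, k = m + 1 := ⟨k - 1, by omega⟩
  have hO2 : ∀ x : V, ∃ a b : V, a ≠ b ∧ outlier A (m + 1) x = {a, b} :=
    fun x => Set.ncard_eq_two.1 (card_outlier hgeo hout hcard x)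
  -- Step 2: every outlier pair sends exactly one arc into each vertex of in-degree 3,
  -- and none anywhere else.
  have star2 : ∀ x z : V, ({w | A w z} ∩ outlier A (m + 1) x).ncard
      = if inDeg A z = 3 then 1 else 0 := by
    intro x
    obtain ⟨a, b, hab, hOx⟩ := hO2 x
    set g : V → ℕ := fun z => (if A a z then 1 else 0) + (if A b z then 1 else 0) with hgdef
    have hg : ∀ z, ({w | A w z} ∩ outlier A (m + 1) x).ncard = g z := by
      intro z
      rw [hOx, Set.inter_comm, pair_inter hab]
      simp only [Set.mem_setOf_eq, hgdef]
    have houtA : ∀ c : V, (∑ z : V, if A c z then (1:ℕ) else 0) = 2 := by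
      intro c; rw [sum_indicator_eq_ncard]; exact hout c
    have hsum : (∑ z : V, g z) = 4 := by
      simp only [hgdef]
      rw [Finset.sum_add_distrib, houtA a, houtA b]
    have hge : ∀ z : V, inDeg A z = 3 → 1 ≤ g z := by
      intro z hz
      have hb := master_bound hgeo hout x z
      rw [hz, hg z] at hb
      omega
    set Sf : Finset V := Finset.univ.filter (fun v => inDeg A v = 3) with hSf
    have hScard : Sf.card = 4 := by
      have := h3
      rw [Set.ncard_eq_toFinset_card', Set.toFinset_setOf] at this
      exact this
    have hsum_ge : 4 ≤ ∑ z ∈ Sf, g z := by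
      have h := Finset.card_nsmul_le_sum Sf g 1
        (fun z hz => hge z (by simpa [hSf] using hz))
      rw [hScard] at h
      simpa using h
    have hsum_le : (∑ z ∈ Sf, g z) ≤ ∑ z : V, g z :=
      Finset.sum_le_sum_of_subset (Finset.subset_univ _)
    have hsum_S : (∑ z ∈ Sf, g z) = 4 := le_antisymm (by omega) hsum_ge
    intro z
    by_cases hz : inDeg A z = 3
    · rw [if_pos hz, hg z]
      have hzS : z ∈ Sf := by simp [hSf, hz]
      have hsplit := Finset.add_sum_erase Sf g hzS
      have herase : 3 ≤ ∑ w ∈ Sf.erase z, g w := by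
        have hc : (Sf.erase z).card = 3 := by rw [Finset.card_erase_of_mem hzS, hScard]
        have h := Finset.card_nsmul_le_sum (Sf.erase z) g 1
          (fun w hw => hge w (by simpa [hSf] using (Finset.mem_erase.1 hw).2))
        rw [hc] at h
        simpa using h
      have h1' := hge z hz
      omega
    · rw [if_neg hz, hg z]
      have hps := Finset.sum_filter_add_sum_filter_not Finset.univ (fun v => inDeg A v = 3) g
      rw [← hSf, hsum_S, hsum] at hps
      have hrest : (∑ w ∈ Finset.univ.filter (fun v => ¬ inDeg A v = 3), g w) = 0 := by omega
      have hzmem : z ∈ Finset.univ.filter (fun v => ¬ inDeg A v = 3) := by simp [hz]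
      exact (Finset.sum_eq_zero_iff.1 hrest) z hzmem
  -- Step 3: vertices of in-degree ≥ 2 are reachable from everywhere
  have star3 : ∀ z : V, 2 ≤ inDeg A z → ∀ x : V, reachIn A (m + 1) x z := by
    intro z hz2 x
    by_contra hzx
    have hx1 : ∃ p, A p x := by
      have h0 : inDeg A x ≠ 0 := by rcases hall x with h | h | h <;> omega
      obtain ⟨p, hp⟩ := Set.nonempty_of_ncard_ne_zero h0
      exact ⟨p, hp⟩
    obtain ⟨p, hpx⟩ := hx1
    obtain ⟨c1, c2, hne, hcc⟩ := children hout p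
    have hm := master hgeo hne hcc z (x := p)
    rw [star2 p z] at hm
    have hxc : x = c1 ∨ x = c2 := by
      have : x ∈ ({c1, c2} : Set V) := by rw [← hcc]; exact hpx
      simpa using this
    have hiz : inDeg A z = 2 ∨ inDeg A z = 3 := by rcases hall z with h | h | h <;> omega
    have hzne : ∀ c : V, x = c → ¬(reachIn A (m+1) c z ∧ z ≠ c) := by
      rintro c rfl h; exact hzx h.1
    rcases hxc with hx | hx
    · rw [if_neg (hzne c1 hx)] at hm
      by_cases hpz : A p z
      · have hzc : z = c1 ∨ z = c2 := by
          have : z ∈ ({c1, c2} : Set V) := by rw [← hcc]; exact hpz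
          simpa using this
        rcases hzc with hzc | hzc
        · rw [← hx] at hzc
          rw [hzc] at hzx
          exact hzx (reachIn_self _ _)
        · rw [if_pos hpz, if_neg (show ¬(reachIn A (m+1) c2 z ∧ z ≠ c2) from
            fun h => h.2 hzc)] at hm
          rcases hiz with h | h <;> rw [h] at hm <;> norm_num at hm
      · rw [if_neg hpz] at hm
        by_cases hC : reachIn A (m+1) c2 z ∧ z ≠ c2
        · rw [if_pos hC] at hm
          rcases hiz with h | h <;> rw [h] at hm <;> norm_num at hm
        · rw [if_neg hC] at hm
          rcases hiz with h | h <;> rw [h] at hm <;> norm_num at hm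
    · rw [if_neg (hzne c2 hx)] at hm
      by_cases hpz : A p z
      · have hzc : z = c1 ∨ z = c2 := by
          have : z ∈ ({c1, c2} : Set V) := by rw [← hcc]; exact hpz
          simpa using this
        rcases hzc with hzc | hzc
        · rw [if_pos hpz, if_neg (show ¬(reachIn A (m+1) c1 z ∧ z ≠ c1) from
            fun h => h.2 hzc)] at hm
          rcases hiz with h | h <;> rw [h] at hm <;> norm_num at hm
        · rw [← hx] at hzc
          rw [hzc] at hzx
          exact hzx (reachIn_self _ _)
      · rw [if_neg hpz] at hm
        by_cases hC : reachIn A (m+1) c1 z ∧ z ≠ c1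
        · rw [if_pos hC] at hm
          rcases hiz with h | h <;> rw [h] at hm <;> norm_num at hm
        · rw [if_neg hC] at hm
          rcases hiz with h | h <;> rw [h] at hm <;> norm_num at hm
  -- outliers have in-degree 1
  have star3' : ∀ (x w : V), w ∈ outlier A (m + 1) x → inDeg A w = 1 := by
    intro x w hw
    rcases hall w with h | h | h
    · exact h
    · exact absurd (star3 w (by omega) x) hw
    · exact absurd (star3 w (by omega) x) hw
  -- Final step
  intro z hz3
  set T : Set V := {v | inDeg A v = 1 ∧ A v z} with hTdef
  have hTcap : ∀ x : V, (T ∩ outlier A (m + 1) x).ncard = 1 := by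
    intro x
    have h2 := star2 x z
    rw [if_pos hz3] at h2
    have heq : {w | A w z} ∩ outlier A (m + 1) x = T ∩ outlier A (m + 1) x := by
      ext w
      simp only [Set.mem_inter_iff, Set.mem_setOf_eq, hTdef]
      constructor
      · rintro ⟨haw, hO⟩
        exact ⟨⟨star3' x w hO, haw⟩, hO⟩
      · rintro ⟨⟨_, haw⟩, hO⟩; exact ⟨haw, hO⟩
    rw [← heq]; exact h2
  have hTS : T ⊆ {v : V | inDeg A v = 1} := fun v hv => hv.1
  have hT4 : T.ncard ≤ 4 := by
    rw [← h1]; exact Set.ncard_le_ncard hTS (Set.toFinite _)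
  have hVne : Nonempty V := by
    have : 0 < Fintype.card V := by rw [hcard]; omega
    exact Fintype.card_pos_iff.1 this
  obtain ⟨x0⟩ := hVne
  have hT0 : T.ncard ≠ 0 := by
    have hne0 : (T ∩ outlier A (m + 1) x0).ncard ≠ 0 := by
      rw [hTcap x0]; omega
    obtain ⟨w, hw⟩ := Set.nonempty_of_ncard_ne_zero hne0
    have hpos : 0 < T.ncard := (Set.ncard_pos (Set.toFinite _)).2 ⟨w, hw.1⟩
    omega
  have hT1 : T.ncard ≠ 1 := by
    intro h1'
    obtain ⟨t, hT⟩ := Set.ncard_eq_one.1 h1'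
    have htO : ∀ x : V, t ∈ outlier A (m + 1) x := by
      intro x
      have hx := hTcap x
      rw [hT] at hx
      obtain ⟨w, hw1, hw2⟩ := Set.nonempty_of_ncard_ne_zero (by omega : (({t} : Set V) ∩ outlier A (m+1) x).ncard ≠ 0)
      rw [Set.mem_singleton_iff] at hw1
      rwa [hw1] at hw2
    exact htO t (reachIn_self _ _)
  have hT3 : T.ncard ≠ 3 := by
    intro h3'
    have hdiff : ({v : V | inDeg A v = 1} \ T).ncard = 1 := by
      rw [Set.ncard_diff hTS, h1, h3']
    obtain ⟨d, hd⟩ := Set.ncard_eq_one.1 hdiff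
    have hdO : ∀ x : V, d ∈ outlier A (m + 1) x := by
      intro x
      obtain ⟨a, b, hab, hOx⟩ := hO2 x
      have hcap := hTcap x
      rw [hOx, Set.inter_comm, pair_inter hab] at hcap
      have haS : inDeg A a = 1 := star3' x a (by rw [hOx]; simp)
      have hbS : inDeg A b = 1 := star3' x b (by rw [hOx]; simp)
      by_cases haT : a ∈ T <;> by_cases hbT : b ∈ T
      · rw [if_pos haT, if_pos hbT] at hcap; omega
      · have hbd : b = d := by
          have : b ∈ ({v : V | inDeg A v = 1} \ T) := ⟨hbS, hbT⟩
          rw [hd] at this; exact this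
        rw [hOx, ← hbd]; simp
      · have had : a = d := by
          have : a ∈ ({v : V | inDeg A v = 1} \ T) := ⟨haS, haT⟩
          rw [hd] at this; exact this
        rw [hOx, ← had]; simp
      · rw [if_neg haT, if_neg hbT] at hcap; omega
    exact hdO d (reachIn_self _ _)
  have hT4' : T.ncard ≠ 4 := by
    intro h4'
    have hTeq : T = {v : V | inDeg A v = 1} :=
      Set.eq_of_subset_of_ncard_le hTS (by rw [h1, h4'])
    obtain ⟨a, b, hab, hOx⟩ := hO2 x0
    have hsub : outlier A (m + 1) x0 ⊆ T := by
      intro w hw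
      rw [hTeq]
      exact star3' x0 w hw
    have hcap := hTcap x0
    rw [Set.inter_eq_self_of_subset_right hsub, hOx, Set.ncard_pair hab] at hcap
    omega
  omega
end

section
/- If there exists a k-geodetic digraph with minimum out-degree at least d and order M(d,k)+ε containing a vertex of in-degree at least d, then for any 0 ≤ r ≤ d there exists a non-diregular k-geodetic digraph with minimum out-degree at least d, order M(d,k)+ε+1, and a vertex of in-degree at most d−r (the vertex-splitting construction: add a new vertex w with N^+(w) = N^+(u) and redirect d−r arcs into u to go into w instead). -/
namespace Stmt19Aux

/-- The construction: add a new vertex (the `Unit` summand) whose out-neighbourhood is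
`S` and which has no in-neighbours. -/
def liftB {V : Type} (A : V → V → Prop) (S : V → Prop) : V ⊕ Unit → V ⊕ Unit → Prop
  | .inl a, .inl b => A a b
  | .inr _, .inl b => S b
  | _, .inr _ => False

variable {V : Type} {A : V → V → Prop} {S : V → Prop}

lemma not_liftB_inr {x : V ⊕ Unit} {y : Unit} : ¬ liftB A S x (.inr y) := by
  cases x <;> exact id

lemma tail_left : ∀ (l : List (V ⊕ Unit)), l.Chain' (liftB A S) →
    ∀ z ∈ l.tail, ∃ b, z = Sum.inl b
  | [], _, z, hz => by simp at hz
  | [a], _, z, hz => by simp at hz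
  | a :: b :: t, h, z, hz => by
    simp only [List.Chain', List.isChain_cons_cons] at h
    rcases List.mem_cons.mp hz with rfl | hz
    · cases z with
      | inl b => exact ⟨b, rfl⟩
      | inr y => exact absurd h.1 not_liftB_inr
    · exact tail_left (b :: t) h.2 z hz

lemma exists_map_inl : ∀ (l : List (V ⊕ Unit)), (∀ z ∈ l, ∃ b, z = Sum.inl b) →
    ∃ m : List V, l = m.map Sum.inl
  | [], _ => ⟨[], rfl⟩
  | a :: t, h => by
    obtain ⟨b, rfl⟩ := h a (List.mem_cons_self)
    obtain ⟨m, rfl⟩ := exists_map_inl t (fun z hz => h z (List.mem_cons_of_mem _ hz))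
    exact ⟨b :: m, rfl⟩

lemma chain'_map_inl {m : List V} :
    (m.map Sum.inl : List (V ⊕ Unit)).Chain' (liftB A S) ↔ m.Chain' A := by
  simp only [List.Chain', List.isChain_map]
  exact ⟨fun h => h.imp fun a b hab => hab, fun h => h.imp fun a b hab => hab⟩

lemma geodetic_liftB {k : ℕ} (hA : IsGeodetic A k)
    (hS : ∀ (m1 m2 : List V) (c : V), m1.Chain' A → m2.Chain' A →
      (∀ h1 ∈ m1.head?, S h1) → (∀ h2 ∈ m2.head?, S h2) →
      m1.getLast? = some c → m2.getLast? = some c →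
      m1.length ≤ k → m2.length ≤ k → m1 ≠ [] → m2 ≠ [] → m1 = m2) :
    IsGeodetic (liftB A S) k := by
  rintro u' v' l1 ⟨hc1, hh1, hg1, hlen1⟩ l2 ⟨hc2, hh2, hg2, hlen2⟩
  obtain ⟨t1, rfl⟩ : ∃ t, l1 = u' :: t := by
    cases l1 with
    | nil => simp at hh1
    | cons a t =>
      rw [List.head?_cons, Option.some_inj] at hh1
      exact ⟨t, by rw [hh1]⟩
  obtain ⟨t2, rfl⟩ : ∃ t, l2 = u' :: t := by
    cases l2 with
    | nil => simp at hh2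
    | cons a t =>
      rw [List.head?_cons, Option.some_inj] at hh2
      exact ⟨t, by rw [hh2]⟩
  have ht1 : ∀ z ∈ t1, ∃ b, z = Sum.inl b := tail_left (u' :: t1) hc1
  have ht2 : ∀ z ∈ t2, ∃ b, z = Sum.inl b := tail_left (u' :: t2) hc2
  cases u' with
  | inl a =>
    obtain ⟨m1, hm1⟩ := exists_map_inl (Sum.inl a :: t1) (by
      intro z hz
      rcases List.mem_cons.mp hz with rfl | hz
      · exact ⟨a, rfl⟩
      · exact ht1 z hz)
    obtain ⟨m2, hm2⟩ := exists_map_inl (Sum.inl a :: t2) (by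
      intro z hz
      rcases List.mem_cons.mp hz with rfl | hz
      · exact ⟨a, rfl⟩
      · exact ht2 z hz)
    rw [hm1] at hc1 hg1 hlen1 ⊢
    rw [hm2] at hc2 hg2 hlen2 ⊢
    rw [List.getLast?_map] at hg1 hg2
    obtain ⟨c, hgc, rfl⟩ := Option.map_eq_some_iff.mp hg1
    have hgc2 : m2.getLast? = some c := by
      obtain ⟨c', hgc', hcc⟩ := Option.map_eq_some_iff.mp hg2
      rw [Sum.inl.injEq] at hcc
      exact hcc ▸ hgc'
    have hh1' : m1.head? = some a := by
      have : (m1.map (Sum.inl : V → V ⊕ Unit)).head? = some (Sum.inl a) := by rw [← hm1]; rfl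
      rw [List.head?_map] at this
      obtain ⟨a', ha', haa⟩ := Option.map_eq_some_iff.mp this
      rw [Sum.inl.injEq] at haa; rwa [haa] at ha'
    have hh2' : m2.head? = some a := by
      have : (m2.map (Sum.inl : V → V ⊕ Unit)).head? = some (Sum.inl a) := by rw [← hm2]; rfl
      rw [List.head?_map] at this
      obtain ⟨a', ha', haa⟩ := Option.map_eq_some_iff.mp this
      rw [Sum.inl.injEq] at haa; rwa [haa] at ha'
    have := hA a c (x := m1) (y := m2)
      ⟨chain'_map_inl.mp hc1, hh1', hgc, by simpa using hlen1⟩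
      ⟨chain'_map_inl.mp hc2, hh2', hgc2, by simpa using hlen2⟩
    rw [this]
  | inr x =>
    cases t1 with
    | nil =>
      cases t2 with
      | nil => rfl
      | cons b2 t2' =>
        exfalso
        simp only [List.getLast?_singleton, Option.some_inj] at hg1
        rw [List.getLast?_cons_cons] at hg2
        have hv : v' ∈ (b2 :: t2') := by
          obtain ⟨hne, heq⟩ := List.mem_getLast?_eq_getLast (Option.mem_def.mpr hg2)
          exact heq ▸ List.getLast_mem hne
        obtain ⟨b, hb⟩ := ht2 v' hv
        rw [← hg1] at hb
        cases hb
    | cons b1 t1' =>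
      cases t2 with
      | nil =>
        exfalso
        simp only [List.getLast?_singleton, Option.some_inj] at hg2
        rw [List.getLast?_cons_cons] at hg1
        have hv : v' ∈ (b1 :: t1') := by
          obtain ⟨hne, heq⟩ := List.mem_getLast?_eq_getLast (Option.mem_def.mpr hg1)
          exact heq ▸ List.getLast_mem hne
        obtain ⟨b, hb⟩ := ht1 v' hv
        rw [← hg2] at hb
        cases hb
      | cons b2 t2' =>
        simp only [List.Chain', List.isChain_cons_cons] at hc1 hc2
        obtain ⟨m1, hm1⟩ := exists_map_inl (b1 :: t1') ht1
        obtain ⟨m2, hm2⟩ := exists_map_inl (b2 :: t2') ht2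
        rw [List.getLast?_cons_cons, hm1, List.getLast?_map] at hg1
        rw [List.getLast?_cons_cons, hm2, List.getLast?_map] at hg2
        obtain ⟨c, hgc1, rfl⟩ := Option.map_eq_some_iff.mp hg1
        have hgc2 : m2.getLast? = some c := by
          obtain ⟨c', hgc', hcc⟩ := Option.map_eq_some_iff.mp hg2
          rw [Sum.inl.injEq] at hcc
          exact hcc ▸ hgc'
        -- heads
        have hm1ne : m1 ≠ [] := by
          intro h; rw [h] at hm1; cases hm1
        have hm2ne : m2 ≠ [] := by
          intro h; rw [h] at hm2; cases hm2
        have hhead1 : ∀ h1 ∈ m1.head?, S h1 := by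
          intro h1 hh
          have : (m1.map (Sum.inl : V → V ⊕ Unit)).head? = some (Sum.inl h1) := by
            rw [List.head?_map, hh]; rfl
          rw [← hm1, List.head?_cons, Option.some_inj] at this
          have hb := hc1.1
          rw [this] at hb
          exact hb
        have hhead2 : ∀ h2 ∈ m2.head?, S h2 := by
          intro h2 hh
          have : (m2.map (Sum.inl : V → V ⊕ Unit)).head? = some (Sum.inl h2) := by
            rw [List.head?_map, hh]; rfl
          rw [← hm2, List.head?_cons, Option.some_inj] at this
          have hb := hc2.1
          rw [this] at hb
          exact hb
        have hlen1' : m1.length ≤ k := by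
          have : (b1 :: t1').length ≤ k := by simpa using hlen1
          rw [hm1, List.length_map] at this; exact this
        have hlen2' : m2.length ≤ k := by
          have : (b2 :: t2').length ≤ k := by simpa using hlen2
          rw [hm2, List.length_map] at this; exact this
        have := hS m1 m2 c (by rw [hm1] at hc1; exact chain'_map_inl.mp hc1.2)
          (by rw [hm2] at hc2; exact chain'_map_inl.mp hc2.2)
          hhead1 hhead2 hgc1 hgc2 hlen1' hlen2' hm1ne hm2ne
        have : (b1 :: t1') = (b2 :: t2') := by rw [hm1, hm2, this]
        rw [this]

variable [Fintype V]

lemma outDeg_liftB_inl (a : V) : outDeg (liftB A S) (Sum.inl a) = outDeg A a := by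
  have hset : {y | liftB A S (Sum.inl a) y} = Sum.inl '' {b | A a b} := by
    ext y
    cases y with
    | inl b => simp [liftB]
    | inr y => simpa [liftB] using not_liftB_inr (A := A) (S := S) (x := Sum.inl a) (y := y)
  rw [outDeg, hset, Set.ncard_image_of_injective _ Sum.inl_injective, outDeg]

lemma outDeg_liftB_inr (x : Unit) : outDeg (liftB A S) (Sum.inr x) = {b | S b}.ncard := by
  have hset : {y | liftB A S (Sum.inr x) y} = Sum.inl '' {b | S b} := by
    ext y
    cases y with
    | inl b => simp [liftB]
    | inr y => simpa [liftB] using not_liftB_inr (A := A) (S := S) (x := Sum.inr x) (y := y)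
  rw [outDeg, hset, Set.ncard_image_of_injective _ Sum.inl_injective]

lemma inDeg_liftB_inr (x : Unit) : inDeg (liftB A S) (Sum.inr x) = 0 := by
  have hset : {y | liftB A S y (Sum.inr x)} = (∅ : Set (V ⊕ Unit)) := by
    ext y
    simpa using not_liftB_inr (A := A) (S := S) (x := y) (y := x)
  rw [inDeg, hset, Set.ncard_empty]

end Stmt19Aux

open Stmt19Aux in
/-- vertex-splitting construction: If there exists a `k`-geodetic digraph
with minimum out-degree at least `d`, order `M(d,k)+ε`, and a vertex of in-degree at least
`d`, then for any `0 ≤ r ≤ d` there exists a non-diregular `k`-geodetic digraph with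
minimum out-degree at least `d`, order `M(d,k)+ε+1`, and a vertex of in-degree at most
`d − r`. -/
theorem stmt19 (d k ε r : ℕ) (hr : r ≤ d)
    (h : ∃ (V : Type) (_ : Fintype V) (A : V → V → Prop),
      IsGeodetic A k ∧ (∀ u : V, d ≤ outDeg A u) ∧
      Fintype.card V = moore d k + ε ∧ ∃ u : V, d ≤ inDeg A u) :
    ∃ (W : Type) (_ : Fintype W) (B : W → W → Prop),
      IsGeodetic B k ∧ (∀ w : W, d ≤ outDeg B w) ∧
      Fintype.card W = moore d k + ε + 1 ∧
      (¬ ∀ w : W, inDeg B w = d ∧ outDeg B w = d) ∧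
      (∃ w : W, inDeg B w ≤ d - r) := by
  obtain ⟨V, instV, A, hgeo, hout, hcard, u, hin⟩ := h
  rcases Nat.eq_zero_or_pos d with hd | hd
  · -- d = 0 : out-neighbourhood of the new vertex is {u}
    refine ⟨V ⊕ Unit, inferInstance, liftB A (fun b => b = u), ?_, ?_, ?_, ?_, ?_⟩
    · apply geodetic_liftB hgeo
      intro m1 m2 c hc1 hc2 hh1 hh2 hg1 hg2 hl1 hl2 hne1 hne2
      obtain ⟨a1, t1, rfl⟩ : ∃ a t, m1 = a :: t := by
        cases m1 with
        | nil => exact absurd rfl hne1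
        | cons a t => exact ⟨a, t, rfl⟩
      obtain ⟨a2, t2, rfl⟩ : ∃ a t, m2 = a :: t := by
        cases m2 with
        | nil => exact absurd rfl hne2
        | cons a t => exact ⟨a, t, rfl⟩
      have h1 : a1 = u := hh1 a1 rfl
      have h2 : a2 = u := hh2 a2 rfl
      exact hgeo u c
        ⟨hc1, by rw [List.head?_cons, h1], hg1, hl1.trans (Nat.le_succ k)⟩
        ⟨hc2, by rw [List.head?_cons, h2], hg2, hl2.trans (Nat.le_succ k)⟩
    · intro w; exact hd ▸ Nat.zero_le _
    · simp [hcard]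
    · intro hall
      have h1 := (hall (Sum.inr ())).2
      rw [outDeg_liftB_inr] at h1
      have : {b : V | b = u}.ncard = 1 := by
        rw [show {b : V | b = u} = {u} by ext b; simp]
        exact Set.ncard_singleton u
      rw [this] at h1
      omega
    · exact ⟨Sum.inr (), by rw [inDeg_liftB_inr]; exact Nat.zero_le _⟩
  · -- d > 0 : out-neighbourhood of the new vertex is N⁺(u)
    refine ⟨V ⊕ Unit, inferInstance, liftB A (fun b => A u b), ?_, ?_, ?_, ?_, ?_⟩
    · apply geodetic_liftB hgeo
      intro m1 m2 c hc1 hc2 hh1 hh2 hg1 hg2 hl1 hl2 hne1 hne2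
      obtain ⟨a1, t1, rfl⟩ : ∃ a t, m1 = a :: t := by
        cases m1 with
        | nil => exact absurd rfl hne1
        | cons a t => exact ⟨a, t, rfl⟩
      obtain ⟨a2, t2, rfl⟩ : ∃ a t, m2 = a :: t := by
        cases m2 with
        | nil => exact absurd rfl hne2
        | cons a t => exact ⟨a, t, rfl⟩
      have w1 : (u :: a1 :: t1) ∈ walksUpTo A k u c :=
        ⟨List.isChain_cons_cons.mpr ⟨hh1 a1 rfl, hc1⟩, rfl, by rw [List.getLast?_cons_cons]; exact hg1,
          by simpa using hl1⟩
      have w2 : (u :: a2 :: t2) ∈ walksUpTo A k u c :=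
        ⟨List.isChain_cons_cons.mpr ⟨hh2 a2 rfl, hc2⟩, rfl, by rw [List.getLast?_cons_cons]; exact hg2,
          by simpa using hl2⟩
      have key := hgeo u c w1 w2
      exact List.tail_eq_of_cons_eq key
    · intro w
      cases w with
      | inl a => rw [outDeg_liftB_inl]; exact hout a
      | inr x => rw [outDeg_liftB_inr]; exact hout u
    · simp [hcard]
    · intro hall
      have h1 := (hall (Sum.inr ())).1
      rw [inDeg_liftB_inr] at h1
      omega
    · exact ⟨Sum.inr (), by rw [inDeg_liftB_inr]; exact Nat.zero_le _⟩
end
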